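/- Let p be an odd prime, 1 ≤ w < p, 0 ≤ l < p, and D_l(X) = Σ_{u∈D_l} X^u ∈ F_p[X] where D_l = {u : 0 ≤ u < p², gcd(u,p)=1, q_{p,w}(u)=l}. Then D_l(1) = p−1 in F_p, the j-th Hasse derivative of D_l evaluated at 1 equals 0 for 1 ≤ j ≤ p−2, and the (p−1)-th Hasse derivative of D_l evaluated at 1 equals 1. -/

import Mathlib

open Finset Polynomial

/-- binomial truncation: `b² ∣ (a+b)^n - (aⁿ + n a^(n-1) b)`. -/
lemma sq_dvd_add_pow (a b : ℤ) : ∀ n : ℕ, b ^ 2 ∣ (a + b) ^ n - (a ^ n + n * a ^ (n - 1) * b)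
  | 0 => by simp
  | 1 => by simp
  | (n + 2) => by
    have ih := sq_dvd_add_pow a b (n + 1)
    have h2 : (a + b) ^ (n + 2) - (a ^ (n + 2) + (↑(n + 2)) * a ^ (n + 2 - 1) * b)
        = (a + b) * ((a + b) ^ (n + 1) - (a ^ (n + 1) + (↑(n + 1)) * a ^ (n + 1 - 1) * b))
          + ((n : ℤ) + 1) * a ^ n * b ^ 2 := by
      have e1 : n + 2 - 1 = n + 1 := rfl
      have e2 : n + 1 - 1 = n := rfl
      rw [e1, e2]
      push_cast
      ring
    rw [h2]
    exact dvd_add (ih.mul_left _) ⟨((n : ℤ) + 1) * a ^ n, by ring⟩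

/-- The polynomial quotient `q_{p,w}(u)`. -/
def polyQuot (p w u : ℕ) : ℕ := ((((u : ℤ) ^ w - (u : ℤ) ^ (w * p)) / (p : ℤ)) % (p : ℤ)).toNat

/-- The set `D_l = {u : 0 ≤ u < p², gcd(u,p)=1, q_{p,w}(u) = l}`. -/
def Dl (p w l : ℕ) : Finset ℕ :=
  (Finset.range (p ^ 2)).filter (fun u => Nat.gcd u p = 1 ∧ polyQuot p w u = l)

section Aux

variable {p : ℕ} [hpF : Fact p.Prime]

lemma p_dvd_fermat (w u : ℕ) : (p : ℤ) ∣ (u : ℤ) ^ w - (u : ℤ) ^ (w * p) := by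
  rw [← ZMod.intCast_zmod_eq_zero_iff_dvd]
  push_cast
  rw [pow_mul, ZMod.pow_card, sub_self]

lemma polyQuot_lt (w u : ℕ) : polyQuot p w u < p := by
  have hp : (0 : ℤ) < p := by exact_mod_cast hpF.out.pos
  unfold polyQuot
  have h1 := Int.emod_nonneg (((u : ℤ) ^ w - (u : ℤ) ^ (w * p)) / (p : ℤ)) (ne_of_gt hp)
  have h2 := Int.emod_lt_of_pos (((u : ℤ) ^ w - (u : ℤ) ^ (w * p)) / (p : ℤ)) hp
  omega

lemma polyQuot_cast (w u : ℕ) :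
    ((polyQuot p w u : ℤ) : ZMod p) = ((((u : ℤ) ^ w - (u : ℤ) ^ (w * p)) / (p : ℤ) : ℤ) : ZMod p) := by
  unfold polyQuot
  have h1 := Int.emod_nonneg (((u : ℤ) ^ w - (u : ℤ) ^ (w * p)) / (p : ℤ))
    (by exact_mod_cast hpF.out.pos.ne' : (p : ℤ) ≠ 0)
  rw [Int.toNat_of_nonneg h1, ZMod.intCast_mod]

lemma polyQuot_add_mul (w b k : ℕ) :
    (polyQuot p w (b + k * p) : ZMod p) =
      (polyQuot p w b : ZMod p) + (w : ZMod p) * (b : ZMod p) ^ (w - 1) * (k : ZMod p) := by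
  have hp0 : (p : ℤ) ≠ 0 := by exact_mod_cast hpF.out.pos.ne'
  set u : ℕ := b + k * p with hu
  have hcastu : ((u : ℤ)) = (b : ℤ) + (k : ℤ) * p := by rw [hu]; push_cast; ring
  set A : ℤ := (u : ℤ) ^ w - (u : ℤ) ^ (w * p) with hA
  set B : ℤ := (b : ℤ) ^ w - (b : ℤ) ^ (w * p) with hB
  set C : ℤ := (w : ℤ) * (b : ℤ) ^ (w - 1) * k with hC
  have hdvd : ((p : ℤ)) ^ 2 ∣ A - B - C * p := by
    have h1 : ((p : ℤ)) ^ 2 ∣ (u : ℤ) ^ w -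
        ((b : ℤ) ^ w + (w : ℤ) * (b : ℤ) ^ (w - 1) * ((k : ℤ) * p)) := by
      have hh := sq_dvd_add_pow (b : ℤ) ((k : ℤ) * p) w
      rw [← hcastu] at hh
      exact dvd_trans ⟨(k : ℤ) ^ 2, by ring⟩ hh
    have h2 : ((p : ℤ)) ^ 2 ∣ (u : ℤ) ^ (w * p) - (b : ℤ) ^ (w * p) := by
      have hub : (p : ℤ) ∣ (u : ℤ) - (b : ℤ) := ⟨k, by rw [hcastu]; ring⟩
      have h4 : ((p : ℤ)) ^ (1 + 1) ∣ (u : ℤ) ^ (p ^ 1) - (b : ℤ) ^ (p ^ 1) :=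
        dvd_sub_pow_of_dvd_sub hub 1
      have h5 : ((u : ℤ) ^ p - (b : ℤ) ^ p) ∣ ((u : ℤ) ^ p) ^ w - ((b : ℤ) ^ p) ^ w :=
        sub_dvd_pow_sub_pow _ _ w
      have h6 : ((p : ℤ)) ^ 2 ∣ ((u : ℤ) ^ p) ^ w - ((b : ℤ) ^ p) ^ w :=
        dvd_trans (by simpa using h4) h5
      simpa [← pow_mul, mul_comm w p] using h6
    have he : A - B - C * p = ((u : ℤ) ^ w -
        ((b : ℤ) ^ w + (w : ℤ) * (b : ℤ) ^ (w - 1) * ((k : ℤ) * p)))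
        - ((u : ℤ) ^ (w * p) - (b : ℤ) ^ (w * p)) := by rw [hA, hB, hC]; ring
    rw [he]; exact dvd_sub h1 h2
  have hQu : (p : ℤ) * (A / p) = A := Int.mul_ediv_cancel' (p_dvd_fermat w u)
  have hQb : (p : ℤ) * (B / p) = B := Int.mul_ediv_cancel' (p_dvd_fermat w b)
  have hpq : (p : ℤ) ∣ A / p - B / p - C := by
    have h7 : ((p : ℤ)) ^ 2 ∣ (p : ℤ) * (A / p - B / p - C) := by
      rw [mul_sub, mul_sub, hQu, hQb]
      convert hdvd using 1; ring
    rcases h7 with ⟨c, hc⟩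
    refine ⟨c, ?_⟩
    apply mul_left_cancel₀ hp0
    rw [hc]; ring
  have hz := (ZMod.intCast_zmod_eq_zero_iff_dvd _ p).mpr hpq
  rw [Int.cast_sub, Int.cast_sub, sub_sub, sub_eq_zero] at hz
  have e1 := polyQuot_cast (p := p) w u
  have e2 := polyQuot_cast (p := p) w b
  rw [← hA] at e1
  rw [← hB] at e2
  calc (polyQuot p w u : ZMod p) = ((A / p : ℤ) : ZMod p) := by exact_mod_cast e1
    _ = ((B / p : ℤ) : ZMod p) + ((C : ℤ) : ZMod p) := hz
    _ = (polyQuot p w b : ZMod p) + (w : ZMod p) * (b : ZMod p) ^ (w - 1) * (k : ZMod p) := by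
        rw [hC]
        push_cast [← e2]
        ring

lemma sum_Dl (w l : ℕ) (hw1 : 1 ≤ w) (hwp : w < p) (hl : l < p) (f : ℕ → ZMod p) :
    ∑ u ∈ Dl p w l, f (u % p) = ∑ b ∈ Finset.Ico 1 p, f b := by
  have hp := hpF.out
  have hp2 : 2 ≤ p := hp.two_le
  have hp0 : 0 < p := hp.pos
  set c : ℕ → ZMod p := fun b => (w : ZMod p) * (b : ZMod p) ^ (w - 1) with hc
  set kk : ℕ → ℕ := fun b => (((l : ZMod p) - (polyQuot p w b : ZMod p)) * (c b)⁻¹).val with hkk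
  set ψ : ℕ → ℕ := fun b => b + kk b * p with hψ
  have hcne : ∀ b ∈ Finset.Ico 1 p, c b ≠ 0 := by
    intro b hb
    rw [Finset.mem_Ico] at hb
    have hwne : (w : ZMod p) ≠ 0 := by
      rw [Ne, ZMod.natCast_eq_zero_iff]
      exact fun h => absurd (Nat.le_of_dvd hw1 h) (not_le.mpr hwp)
    have hbne : (b : ZMod p) ≠ 0 := by
      rw [Ne, ZMod.natCast_eq_zero_iff]
      exact fun h => absurd (Nat.le_of_dvd hb.1 h) (not_le.mpr hb.2)
    exact mul_ne_zero hwne (pow_ne_zero _ hbne)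
  have hkkcast : ∀ b, (kk b : ZMod p) = ((l : ZMod p) - (polyQuot p w b : ZMod p)) * (c b)⁻¹ := by
    intro b
    simp [hkk, ZMod.natCast_val, ZMod.cast_id]
  have hkklt : ∀ b, kk b < p := fun b => ZMod.val_lt _
  have hquot : ∀ b ∈ Finset.Ico 1 p, polyQuot p w (ψ b) = l := by
    intro b hb
    have h1 : (polyQuot p w (ψ b) : ZMod p) = (l : ZMod p) := by
      rw [hψ]
      simp only
      rw [polyQuot_add_mul w b (kk b), hkkcast b]
      have hcb := hcne b hb
      rw [show (w : ZMod p) * (b : ZMod p) ^ (w - 1) = c b from rfl,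
        mul_comm (c b), mul_assoc, inv_mul_cancel₀ hcb]
      ring
    have h2 : polyQuot p w (ψ b) < p := polyQuot_lt w _
    calc polyQuot p w (ψ b) = ((polyQuot p w (ψ b) : ZMod p)).val := (ZMod.val_cast_of_lt h2).symm
      _ = ((l : ZMod p)).val := by rw [h1]
      _ = l := ZMod.val_cast_of_lt hl
  refine Finset.sum_nbij' (fun u => u % p) ψ ?_ ?_ ?_ ?_ ?_
  · -- maps Dl → Ico 1 p
    intro u hu
    rw [Dl, Finset.mem_filter, Finset.mem_range] at hu
    rw [Finset.mem_Ico]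
    refine ⟨?_, Nat.mod_lt _ hp0⟩
    rcases Nat.eq_zero_or_pos (u % p) with h | h
    · exfalso
      have hdvd : p ∣ u := Nat.dvd_of_mod_eq_zero h
      have : p ∣ Nat.gcd u p := Nat.dvd_gcd hdvd dvd_rfl
      rw [hu.2.1] at this
      have := Nat.le_of_dvd one_pos this
      omega
    · exact h
  · -- maps Ico 1 p → Dl
    intro b hb
    have hb' := Finset.mem_Ico.mp hb
    rw [Dl, Finset.mem_filter, Finset.mem_range]
    refine ⟨?_, ?_, hquot b hb⟩
    · have h1 : (kk b + 1) * p ≤ p * p := Nat.mul_le_mul_right p (hkklt b)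
      rw [add_one_mul] at h1
      have hpp : p * p = p ^ 2 := (sq p).symm
      show b + kk b * p < p ^ 2
      omega
    · have hcop : Nat.Coprime b p := by
        rw [Nat.coprime_comm]
        exact (hp.coprime_iff_not_dvd).mpr
          (fun h => absurd (Nat.le_of_dvd hb'.1 h) (not_le.mpr hb'.2))
      show Nat.gcd (b + kk b * p) p = 1
      rw [Nat.gcd_add_mul_right_left p b (kk b)]
      exact hcop
  · -- left inverse : ψ (u % p) = u
    intro u hu
    rw [Dl, Finset.mem_filter, Finset.mem_range] at hu
    set b := u % p with hbdef
    set k := u / p with hkdef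
    have hub : u = b + k * p := by
      rw [hbdef, hkdef]; exact (Nat.mod_add_div' u p).symm
    have hklt : k < p := by
      rw [hkdef, Nat.div_lt_iff_lt_mul hp0]
      calc u < p ^ 2 := hu.1
        _ = p * p := sq p
    have hcb : c b ≠ 0 := by
      apply hcne
      rw [Finset.mem_Ico]
      constructor
      · rcases Nat.eq_zero_or_pos b with h | h
        · exfalso
          have hdvd : p ∣ u := Nat.dvd_of_mod_eq_zero h
          have : p ∣ Nat.gcd u p := Nat.dvd_gcd hdvd dvd_rfl
          rw [hu.2.1] at this
          have := Nat.le_of_dvd one_pos this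
          omega
        · exact h
      · exact Nat.mod_lt _ hp0
    have heq : (l : ZMod p) = (polyQuot p w b : ZMod p) + c b * (k : ZMod p) := by
      rw [← hu.2.2, hub, polyQuot_add_mul w b k, hc]
    have hkval : (k : ZMod p) = ((l : ZMod p) - (polyQuot p w b : ZMod p)) * (c b)⁻¹ := by
      rw [heq]
      field_simp
      ring
    have : kk b = k := by
      rw [hkk]
      simp only
      rw [← hkval, ZMod.val_cast_of_lt hklt]
    show b + kk b * p = u
    rw [this, hbdef, hkdef]
    exact Nat.mod_add_div' u p
  · -- right inverse : (ψ b) % p = b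
    intro b hb
    have hb' := Finset.mem_Ico.mp hb
    show (b + kk b * p) % p = b
    rw [Nat.add_mul_mod_self_right]
    exact Nat.mod_eq_of_lt hb'.2
  · intro a _
    rfl

end Aux

theorem stmt_12 (p w l : ℕ) (hp : p.Prime) (hodd : Odd p)
    (hw1 : 1 ≤ w) (hwp : w < p) (hl : l < p) :
    (∑ u ∈ Dl p w l, (Polynomial.X : Polynomial (ZMod p)) ^ u).eval 1 = ((p - 1 : ℕ) : ZMod p) ∧
    (∀ j : ℕ, 1 ≤ j → j ≤ p - 2 →
      (Polynomial.hasseDeriv j (∑ u ∈ Dl p w l, (Polynomial.X : Polynomial (ZMod p)) ^ u)).eval 1 = 0) ∧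
    (Polynomial.hasseDeriv (p - 1) (∑ u ∈ Dl p w l, (Polynomial.X : Polynomial (ZMod p)) ^ u)).eval 1 = 1 := by
  haveI hpF : Fact p.Prime := ⟨hp⟩
  have hp2 : 2 ≤ p := hp.two_le
  have hev : ∀ j : ℕ, (Polynomial.hasseDeriv j
      (∑ u ∈ Dl p w l, (Polynomial.X : Polynomial (ZMod p)) ^ u)).eval 1
      = ∑ u ∈ Dl p w l, ((u.choose j : ℕ) : ZMod p) := by
    intro j
    rw [map_sum, Polynomial.eval_finset_sum]
    apply Finset.sum_congr rfl
    intro u _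
    rw [Polynomial.X_pow_eq_monomial, Polynomial.hasseDeriv_monomial, Polynomial.eval_monomial]
    simp
  have lucas : ∀ j : ℕ, j < p → ∀ u : ℕ, ((u.choose j : ℕ) : ZMod p) = (((u % p).choose j : ℕ) : ZMod p) := by
    intro j hj u
    have h := Choose.choose_modEq_choose_mod_mul_choose_div (n := u) (k := j) (p := p)
    rw [Nat.mod_eq_of_lt hj, Nat.div_eq_of_lt hj, Nat.choose_zero_right, Nat.cast_one, mul_one] at h
    have h2 := (ZMod.intCast_eq_intCast_iff _ _ _).mpr h
    push_cast at h2
    exact_mod_cast h2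
  have hsum : ∀ j : ℕ, 1 ≤ j → j ≤ p - 1 →
      ∑ b ∈ Finset.Ico 1 p, b.choose j = p.choose (j + 1) := by
    intro j hj1 hj2
    have h1 : Finset.Ico 1 p = Finset.Icc 1 (p - 1) := by
      rw [← Finset.Ico_add_one_right_eq_Icc]
      congr 1
      omega
    have hsub : Finset.Icc j (p - 1) ⊆ Finset.Icc 1 (p - 1) :=
      Finset.Icc_subset_Icc hj1 le_rfl
    have hzero : ∀ x ∈ Finset.Icc 1 (p - 1), x ∉ Finset.Icc j (p - 1) → x.choose j = 0 := by
      intro x hx hx'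
      rw [Finset.mem_Icc] at hx
      rw [Finset.mem_Icc] at hx'
      exact Nat.choose_eq_zero_of_lt (by omega)
    calc ∑ b ∈ Finset.Ico 1 p, b.choose j
        = ∑ b ∈ Finset.Icc 1 (p - 1), b.choose j := by rw [h1]
      _ = ∑ b ∈ Finset.Icc j (p - 1), b.choose j := (Finset.sum_subset hsub hzero).symm
      _ = ((p - 1) + 1).choose (j + 1) := Nat.sum_Icc_choose _ _
      _ = p.choose (j + 1) := by congr 1; omega
  have key : ∀ j : ℕ, 1 ≤ j → j ≤ p - 1 →
      (Polynomial.hasseDeriv j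
        (∑ u ∈ Dl p w l, (Polynomial.X : Polynomial (ZMod p)) ^ u)).eval 1
      = ((p.choose (j + 1) : ℕ) : ZMod p) := by
    intro j hj1 hj2
    have hjp : j < p := by omega
    rw [hev j]
    calc ∑ u ∈ Dl p w l, ((u.choose j : ℕ) : ZMod p)
        = ∑ u ∈ Dl p w l, (fun b => ((b.choose j : ℕ) : ZMod p)) (u % p) :=
          Finset.sum_congr rfl (fun u _ => lucas j hjp u)
      _ = ∑ b ∈ Finset.Ico 1 p, ((b.choose j : ℕ) : ZMod p) :=
          sum_Dl w l hw1 hwp hl (fun b => ((b.choose j : ℕ) : ZMod p))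
      _ = ((∑ b ∈ Finset.Ico 1 p, b.choose j : ℕ) : ZMod p) := by rw [Nat.cast_sum]
      _ = ((p.choose (j + 1) : ℕ) : ZMod p) := by rw [hsum j hj1 hj2]
  refine ⟨?_, ?_, ?_⟩
  · rw [Polynomial.eval_finset_sum]
    have : ∀ u ∈ Dl p w l, ((Polynomial.X : Polynomial (ZMod p)) ^ u).eval 1 = (1 : ZMod p) := by
      intro u _
      simp
    rw [Finset.sum_congr rfl this]
    have h2 := sum_Dl (p := p) w l hw1 hwp hl (fun _ => (1 : ZMod p))
    rw [h2]
    simp [Finset.sum_const, Nat.card_Ico]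
  · intro j hj1 hj2
    rw [key j hj1 (by omega)]
    rw [ZMod.natCast_eq_zero_iff]
    exact hp.dvd_choose_self (by omega) (by omega)
  · rw [key (p - 1) (by omega) le_rfl]
    rw [show p - 1 + 1 = p from by omega, Nat.choose_self, Nat.cast_one]
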